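/- Let A be a nonnegative bounded linear operator on L²(X) with A^r = A (r ≥ 2) and kernel containing no nonzero nonnegative function. Suppose e_r, e_s ∈ R(A) are nonnegative with μ(Supp e_r ∩ Supp e_s) > 0, μ(Supp e_r \ Supp e_s) > 0, μ(Supp e_s \ Supp e_r) > 0, and the restrictions of e_r and e_s to Supp e_r ∩ Supp e_s are linearly dependent. Then there exist three nonzero nonnegative functions in R(A) with pairwise essentially disjoint supports. -/

import Mathlib

open MeasureTheory

set_option maxHeartbeats 1000000 in
theorem stmt11 {X : Type*} [MeasurableSpace X] (μ : Measure X) [IsFiniteMeasure μ]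
    (A : Lp ℝ 2 μ →L[ℝ] Lp ℝ 2 μ)
    (hpos : ∀ f : Lp ℝ 2 μ, 0 ≤ f → 0 ≤ A f)
    (r : ℕ) (hr : 2 ≤ r) (hpot : A ^ r = A)
    (hker : ∀ h : Lp ℝ 2 μ, A h = 0 → 0 ≤ h → h = 0)
    (er es : Lp ℝ 2 μ) (her : er ∈ Set.range A) (hes : es ∈ Set.range A)
    (her0 : 0 ≤ er) (hes0 : 0 ≤ es)
    (hcap : 0 < μ (Function.support (er : X → ℝ) ∩ Function.support (es : X → ℝ)))
    (hrs : 0 < μ (Function.support (er : X → ℝ) \ Function.support (es : X → ℝ)))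
    (hsr : 0 < μ (Function.support (es : X → ℝ) \ Function.support (er : X → ℝ)))
    (hdep : ∃ α β : ℝ, (α ≠ 0 ∨ β ≠ 0) ∧
      (fun x => α * (Function.support (er : X → ℝ) ∩
          Function.support (es : X → ℝ)).indicator (er : X → ℝ) x
        + β * (Function.support (er : X → ℝ) ∩
          Function.support (es : X → ℝ)).indicator (es : X → ℝ) x) =ᵐ[μ] 0) :
    ∃ f : Fin 3 → Lp ℝ 2 μ,
      (∀ i, f i ∈ Set.range A) ∧ (∀ i, f i ≠ 0) ∧ (∀ i, 0 ≤ f i) ∧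
      ∀ i j, i ≠ j →
        μ (Function.support (f i : X → ℝ) ∩ Function.support (f j : X → ℝ)) = 0 := by
  classical
  obtain ⟨a, ha⟩ := her
  obtain ⟨b, hb⟩ := hes
  set Er := Function.support (er : X → ℝ) with hEr
  set Es := Function.support (es : X → ℝ) with hEs
  set S := Er ∩ Es with hSdef
  obtain ⟨α, β, hαβ, hlin⟩ := hdep
  obtain ⟨m, rfl⟩ : ∃ m, r = m + 2 := ⟨r - 2, by omega⟩
  -- helper: extract a point of a positive-measure set satisfying an a.e. property
  have exmem : ∀ (T : Set X) (P : X → Prop), 0 < μ T → (∀ᵐ x ∂μ, P x) →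
      ∃ x ∈ T, P x := by
    intro T P hT hP
    by_contra hcon
    push_neg at hcon
    have hsub : T ⊆ {x | ¬ P x} := fun x hx => hcon x hx
    rw [ae_iff] at hP
    exact absurd (le_antisymm ((measure_mono hsub).trans hP.le) (by simp)) hT.ne'
  have hmem_r : ∀ x, x ∈ Er ↔ (er : X → ℝ) x ≠ 0 := fun x => by
    rw [hEr]; exact Function.mem_support
  have hmem_s : ∀ x, x ∈ Es ↔ (es : X → ℝ) x ≠ 0 := fun x => by
    rw [hEs]; exact Function.mem_support
  have her0' : ∀ᵐ x ∂μ, 0 ≤ (er : X → ℝ) x := by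
    filter_upwards [(Lp.coeFn_nonneg er).mpr her0] with x hx; exact hx
  have hes0' : ∀ᵐ x ∂μ, 0 ≤ (es : X → ℝ) x := by
    filter_upwards [(Lp.coeFn_nonneg es).mpr hes0] with x hx; exact hx
  have hlin' : ∀ᵐ x ∂μ,
      α * S.indicator (er : X → ℝ) x + β * S.indicator (es : X → ℝ) x = 0 := by
    filter_upwards [hlin] with x hx; simpa using hx
  -- both coefficients are nonzero
  have hα : α ≠ 0 := by
    intro h0
    obtain ⟨x, hxS, hx⟩ := exmem S _ hcap hlin'
    rw [Set.indicator_of_mem hxS, Set.indicator_of_mem hxS, h0, zero_mul, zero_add] at hx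
    rcases hαβ with h | h
    · exact h h0
    · rcases mul_eq_zero.mp hx with h' | h'
      · exact h h'
      · rw [hSdef] at hxS
        exact (hmem_s x).mp hxS.2 h'
  have hβ : β ≠ 0 := by
    intro h0
    obtain ⟨x, hxS, hx⟩ := exmem S _ hcap hlin'
    rw [Set.indicator_of_mem hxS, Set.indicator_of_mem hxS, h0, zero_mul, add_zero] at hx
    rcases mul_eq_zero.mp hx with h' | h'
    · exact hα h'
    · rw [hSdef] at hxS
      exact (hmem_r x).mp hxS.1 h'
  set c : ℝ := -(β / α) with hcdef
  have hac : α * c = -β := by rw [hcdef]; field_simp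
  have hrel : ∀ᵐ x ∂μ, x ∈ S → (er : X → ℝ) x = c * (es : X → ℝ) x := by
    filter_upwards [hlin'] with x hx hxS
    rw [Set.indicator_of_mem hxS, Set.indicator_of_mem hxS] at hx
    refine mul_left_cancel₀ hα ?_
    calc α * ((er : X → ℝ) x) = -(β * (es : X → ℝ) x) := by linarith
      _ = α * (c * (es : X → ℝ) x) := by rw [← mul_assoc, hac]; ring
  have hcpos : 0 < c := by
    obtain ⟨x, hxS, hx⟩ := exmem S _ hcap (hrel.and (her0'.and hes0'))
    have h1 := hx.1 hxS
    rw [hSdef] at hxS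
    have h2 : 0 < (er : X → ℝ) x :=
      lt_of_le_of_ne hx.2.1 (Ne.symm ((hmem_r x).mp hxS.1))
    have h3 : 0 < (es : X → ℝ) x :=
      lt_of_le_of_ne hx.2.2 (Ne.symm ((hmem_s x).mp hxS.2))
    by_contra hcle
    push_neg at hcle
    nlinarith
  -- the key elements
  set u : Lp ℝ 2 μ := er - c • es with hudef
  set up : Lp ℝ 2 μ := u ⊔ 0 with hupdef
  set un : Lp ℝ 2 μ := up - u with hundef
  set f2 : Lp ℝ 2 μ := er - up with hf2def
  have huA : A (a - c • b) = u := by rw [hudef, map_sub, A.map_smul, ha, hb]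
  -- positivity of powers of A
  have hposP : ∀ (n : ℕ) (f : Lp ℝ 2 μ), 0 ≤ f → 0 ≤ (A ^ n) f := by
    intro n
    induction n with
    | zero => intro f hf; simpa using hf
    | succ n ih =>
        intro f hf
        rw [pow_succ', ContinuousLinearMap.mul_apply]
        exact hpos _ (ih f hf)
  have hPu : (A ^ (m + 1)) u = u := by
    rw [← huA, ← ContinuousLinearMap.mul_apply, ← pow_succ, hpot, huA]
  have hup_nonneg : (0 : Lp ℝ 2 μ) ≤ up := le_sup_right
  have hu_le_up : u ≤ up := le_sup_left
  -- P up ≥ up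
  have hPup_ge : up ≤ (A ^ (m + 1)) up := by
    have h1 : (0 : Lp ℝ 2 μ) ≤ (A ^ (m + 1)) (up - u) :=
      hposP _ _ (sub_nonneg.mpr hu_le_up)
    rw [map_sub, hPu, sub_nonneg] at h1
    have h2 : (0 : Lp ℝ 2 μ) ≤ (A ^ (m + 1)) up := hposP _ _ hup_nonneg
    rw [hupdef]
    exact sup_le h1 h2
  -- A kills P up - up, hence P up = up
  have hPup : (A ^ (m + 1)) up = up := by
    have hk0 : A ((A ^ (m + 1)) up - up) = 0 := by
      rw [map_sub]
      have h1 : A ((A ^ (m + 1)) up) = A up := by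
        rw [← ContinuousLinearMap.mul_apply, ← pow_succ', hpot]
      rw [h1, sub_self]
    exact sub_eq_zero.mp (hker _ hk0 (sub_nonneg.mpr hPup_ge))
  -- range memberships
  have hup_mem : up ∈ Set.range A :=
    ⟨(A ^ m) up, by rw [← ContinuousLinearMap.mul_apply, ← pow_succ', hPup]⟩
  obtain ⟨w, hw⟩ := hup_mem
  have hun_mem : un ∈ Set.range A := ⟨w - (a - c • b), by rw [map_sub, hw, huA, hundef]⟩
  have hf2_mem : f2 ∈ Set.range A := ⟨a - w, by rw [map_sub, hw, ha, hf2def]⟩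
  -- coeFn descriptions
  have hu_coe : ⇑u =ᵐ[μ] fun x => (er : X → ℝ) x - c * (es : X → ℝ) x := by
    rw [hudef]
    filter_upwards [Lp.coeFn_sub er (c • es), Lp.coeFn_smul c es] with x h1 h2
    rw [h1, Pi.sub_apply, h2, Pi.smul_apply, smul_eq_mul]
  have hup_coe : ⇑up =ᵐ[μ] fun x => max ((u : X → ℝ) x) 0 := by
    rw [hupdef]
    filter_upwards [Lp.coeFn_sup u 0, Lp.coeFn_zero (E := ℝ) (p := 2) (μ := μ)]
      with x h1 h2
    simp only [h1, Pi.sup_apply, h2, Pi.zero_apply]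
  have hun_coe : ⇑un =ᵐ[μ] fun x => (up : X → ℝ) x - (u : X → ℝ) x := by
    rw [hundef]
    filter_upwards [Lp.coeFn_sub up u] with x h1
    rw [h1, Pi.sub_apply]
  have hf2_coe : ⇑f2 =ᵐ[μ] fun x => (er : X → ℝ) x - (up : X → ℝ) x := by
    rw [hf2def]
    filter_upwards [Lp.coeFn_sub er up] with x h1
    rw [h1, Pi.sub_apply]
  -- the key pointwise description
  have key : ∀ᵐ x ∂μ,
      ((up : X → ℝ) x = if x ∈ Er \ Es then (er : X → ℝ) x else 0) ∧
      ((un : X → ℝ) x = if x ∈ Es \ Er then c * (es : X → ℝ) x else 0) ∧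
      ((f2 : X → ℝ) x = if x ∈ S then (er : X → ℝ) x else 0) := by
    filter_upwards [her0', hes0', hrel, hu_coe, hup_coe, hun_coe, hf2_coe]
      with x h0r h0s hRel hU hUP hUN hF2
    by_cases hxr : x ∈ Er <;> by_cases hxs : x ∈ Es
    · -- x ∈ S
      have hxS : x ∈ S := by rw [hSdef]; exact ⟨hxr, hxs⟩
      have hu0 : (u : X → ℝ) x = 0 := by rw [hU, hRel hxS]; ring
      have hup0 : (up : X → ℝ) x = 0 := by rw [hUP, hu0]; simp
      refine ⟨?_, ?_, ?_⟩
      · rw [if_neg (fun h => h.2 hxs)]; exact hup0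
      · rw [if_neg (fun h => h.2 hxr), hUN, hup0, hu0, sub_zero]
      · rw [if_pos hxS, hF2, hup0, sub_zero]
    · -- x ∈ Er \ Es
      have hes_x : (es : X → ℝ) x = 0 := by
        by_contra h; exact hxs ((hmem_s x).mpr h)
      have herpos : 0 < (er : X → ℝ) x :=
        lt_of_le_of_ne h0r (Ne.symm ((hmem_r x).mp hxr))
      have hu_eq : (u : X → ℝ) x = (er : X → ℝ) x := by rw [hU, hes_x]; ring
      have hup_eq : (up : X → ℝ) x = (er : X → ℝ) x := by
        rw [hUP, hu_eq, max_eq_left herpos.le]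
      have hxS : x ∉ S := by rw [hSdef]; exact fun h => hxs h.2
      refine ⟨?_, ?_, ?_⟩
      · rw [if_pos ⟨hxr, hxs⟩]; exact hup_eq
      · rw [if_neg (fun h => h.2 hxr), hUN, hup_eq, hu_eq, sub_self]
      · rw [if_neg hxS, hF2, hup_eq, sub_self]
    · -- x ∈ Es \ Er
      have her_x : (er : X → ℝ) x = 0 := by
        by_contra h; exact hxr ((hmem_r x).mpr h)
      have hespos : 0 < (es : X → ℝ) x :=
        lt_of_le_of_ne h0s (Ne.symm ((hmem_s x).mp hxs))
      have hu_eq : (u : X → ℝ) x = -(c * (es : X → ℝ) x) := by rw [hU, her_x]; ring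
      have hup0 : (up : X → ℝ) x = 0 := by
        rw [hUP, hu_eq, max_eq_right]
        nlinarith
      have hxS : x ∉ S := by rw [hSdef]; exact fun h => hxr h.1
      refine ⟨?_, ?_, ?_⟩
      · rw [if_neg (fun h => hxr h.1)]
        exact hup0
      · rw [if_pos ⟨hxs, hxr⟩, hUN, hup0, hu_eq]; ring
      · rw [if_neg hxS, hF2, hup0, her_x, sub_zero]
    · -- x outside both
      have her_x : (er : X → ℝ) x = 0 := by
        by_contra h; exact hxr ((hmem_r x).mpr h)
      have hes_x : (es : X → ℝ) x = 0 := by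
        by_contra h; exact hxs ((hmem_s x).mpr h)
      have hu0 : (u : X → ℝ) x = 0 := by rw [hU, her_x, hes_x]; ring
      have hup0 : (up : X → ℝ) x = 0 := by rw [hUP, hu0]; simp
      have hxS : x ∉ S := by rw [hSdef]; exact fun h => hxr h.1
      refine ⟨?_, ?_, ?_⟩
      · rw [if_neg (fun h => hxr h.1)]; exact hup0
      · rw [if_neg (fun h => hxs h.1), hUN, hup0, hu0, sub_zero]
      · rw [if_neg hxS, hF2, hup0, her_x, sub_zero]
  -- supports land in the three regions
  have hsup_up : ∀ᵐ x ∂μ, (up : X → ℝ) x ≠ 0 → x ∈ Er \ Es := by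
    filter_upwards [key] with x hk hne
    by_contra hmem
    rw [hk.1, if_neg hmem] at hne
    exact hne rfl
  have hsup_un : ∀ᵐ x ∂μ, (un : X → ℝ) x ≠ 0 → x ∈ Es \ Er := by
    filter_upwards [key] with x hk hne
    by_contra hmem
    rw [hk.2.1, if_neg hmem] at hne
    exact hne rfl
  have hsup_f2 : ∀ᵐ x ∂μ, (f2 : X → ℝ) x ≠ 0 → x ∈ S := by
    filter_upwards [key] with x hk hne
    by_contra hmem
    rw [hk.2.2, if_neg hmem] at hne
    exact hne rfl
  -- nonzeroness
  have hup_ne : up ≠ 0 := by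
    intro h0
    have h0' : ⇑up =ᵐ[μ] 0 := Lp.eq_zero_iff_ae_eq_zero.mp h0
    obtain ⟨x, hxT, hk, hz⟩ := exmem (Er \ Es) _ hrs (key.and h0')
    rw [hk.1, if_pos hxT] at hz
    exact (hmem_r x).mp hxT.1 hz
  have hun_ne : un ≠ 0 := by
    intro h0
    have h0' : ⇑un =ᵐ[μ] 0 := Lp.eq_zero_iff_ae_eq_zero.mp h0
    obtain ⟨x, hxT, hk, hz⟩ := exmem (Es \ Er) _ hsr (key.and h0')
    rw [hk.2.1, if_pos hxT] at hz
    exact (hmem_s x).mp hxT.1 (by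
      rcases mul_eq_zero.mp hz with h | h
      · exact absurd h hcpos.ne'
      · exact h)
  have hf2_ne : f2 ≠ 0 := by
    intro h0
    have h0' : ⇑f2 =ᵐ[μ] 0 := Lp.eq_zero_iff_ae_eq_zero.mp h0
    obtain ⟨x, hxT, hk, hz⟩ := exmem S _ hcap (key.and h0')
    rw [hk.2.2, if_pos hxT] at hz
    rw [hSdef] at hxT
    exact (hmem_r x).mp hxT.1 hz
  -- nonnegativity
  have hun_nonneg : (0 : Lp ℝ 2 μ) ≤ un := sub_nonneg.mpr hu_le_up
  have hf2_nonneg : (0 : Lp ℝ 2 μ) ≤ f2 := by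
    refine (Lp.coeFn_nonneg f2).mp ?_
    filter_upwards [key, her0'] with x hk h0r
    simp only [Pi.zero_apply]
    rw [hk.2.2]
    split_ifs
    · exact h0r
    · exact le_refl 0
  -- disjointness machinery
  have hnull : ∀ (T1 T2 : Set X) (g1 g2 : Lp ℝ 2 μ),
      (∀ᵐ x ∂μ, (g1 : X → ℝ) x ≠ 0 → x ∈ T1) →
      (∀ᵐ x ∂μ, (g2 : X → ℝ) x ≠ 0 → x ∈ T2) → Disjoint T1 T2 →
      μ (Function.support (g1 : X → ℝ) ∩ Function.support (g2 : X → ℝ)) = 0 := by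
    intro T1 T2 g1 g2 h1 h2 hd
    refine measure_mono_null (fun x hx => ?_) (ae_iff.mp (h1.and h2))
    simp only [Set.mem_setOf_eq]
    intro hgood
    exact Set.disjoint_left.mp hd (hgood.1 (Function.mem_support.mp hx.1))
      (hgood.2 (Function.mem_support.mp hx.2))
  have hdisj01 : Disjoint (Er \ Es) (Es \ Er) :=
    Set.disjoint_left.mpr fun x hx h => hx.2 h.1
  have hdisj02 : Disjoint (Er \ Es) S :=
    Set.disjoint_left.mpr fun x hx h => hx.2 (by rw [hSdef] at h; exact h.2)
  have hdisj12 : Disjoint (Es \ Er) S :=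
    Set.disjoint_left.mpr fun x hx h => hx.2 (by rw [hSdef] at h; exact h.1)
  have d01 := hnull _ _ up un hsup_up hsup_un hdisj01
  have d10 := hnull _ _ un up hsup_un hsup_up hdisj01.symm
  have d02 := hnull _ _ up f2 hsup_up hsup_f2 hdisj02
  have d20 := hnull _ _ f2 up hsup_f2 hsup_up hdisj02.symm
  have d12 := hnull _ _ un f2 hsup_un hsup_f2 hdisj12
  have d21 := hnull _ _ f2 un hsup_f2 hsup_un hdisj12.symm
  refine ⟨![up, un, f2], ?_, ?_, ?_, ?_⟩
  · intro i
    fin_cases i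
    · exact ⟨w, hw⟩
    · exact hun_mem
    · exact hf2_mem
  · intro i
    fin_cases i
    · exact hup_ne
    · exact hun_ne
    · exact hf2_ne
  · intro i
    fin_cases i
    · exact hup_nonneg
    · exact hun_nonneg
    · exact hf2_nonneg
  · intro i j hij
    fin_cases i <;> fin_cases j <;>
      simp only [Matrix.cons_val_zero, Matrix.cons_val_one, Matrix.head_cons,
        Matrix.cons_val_two, Matrix.tail_cons, Fin.isValue] <;>
      first
      | exact absurd rfl hij
      | exact d01
      | exact d02
      | exact d10
      | exact d12
      | exact d20
      | exact d21
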